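/- Let R = (R^n, {A_σ}_{σ∈Σ}, B, C) be a representation of a family of formal power series Ψ = {S_j : Σ* → R^p | j ∈ J}, i.e. S_j(σ₁⋯σ_k) = C A_{σ_k}⋯A_{σ₁} B_j for all words. If the matrix Ã = Σ_{σ∈Σ} A_σᵀ ⊗ A_σᵀ has all eigenvalues strictly inside the unit disk, then each series S_j is square summable, i.e. Σ_{w∈Σ*} ‖S_j(w)‖₂² < ∞. -/

import Mathlib

open Matrix

/-- For a word `w = σ₁⋯σ_k`, `wordProd A w = A_{σ_k} ⋯ A_{σ₁}`. -/
def wordProd {S : Type*} {n : ℕ} (A : S → Matrix (Fin n) (Fin n) ℝ) :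
    List S → Matrix (Fin n) (Fin n) ℝ :=
  fun w => w.foldl (fun M σ => A σ * M) 1

section AuxSquareSummable

attribute [local instance] Matrix.linftyOpNormedAddCommGroup Matrix.linftyOpNormedRing
  Matrix.linftyOpNormedAlgebra

private lemma foldl_mul_eq {S : Type*} {n : ℕ} (A : S → Matrix (Fin n) (Fin n) ℝ) :
    ∀ (w : List S) (X : Matrix (Fin n) (Fin n) ℝ),
      w.foldl (fun M σ => A σ * M) X = w.foldl (fun M σ => A σ * M) 1 * X
  | [], X => by simp
  | τ :: w, X => by
      simp only [List.foldl_cons]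
      rw [foldl_mul_eq A w (A τ * X), foldl_mul_eq A w (A τ * 1), mul_one, mul_assoc]

private lemma wordProd_cons {S : Type*} {n : ℕ} (A : S → Matrix (Fin n) (Fin n) ℝ)
    (σ : S) (w : List S) : wordProd A (σ :: w) = wordProd A w * A σ := by
  show (σ :: w).foldl (fun M σ => A σ * M) 1 = _
  rw [List.foldl_cons, foldl_mul_eq, mul_one]
  rfl

private lemma entry_nnnorm_le {ι : Type*} [Fintype ι] (M : Matrix ι ι ℂ) (i j : ι) :
    ‖M i j‖₊ ≤ ‖M‖₊ := by
  rw [Matrix.linfty_opNNNorm_def]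
  exact le_trans (Finset.single_le_sum (f := fun j => ‖M i j‖₊) (by simp) (Finset.mem_univ j))
    (Finset.le_sup (f := fun i => ∑ j, ‖M i j‖₊) (Finset.mem_univ i))

private lemma sum_reverse {α β γ : Type*} [Fintype α] [Fintype β] [Fintype γ]
    (f : α → β → γ → ℝ) :
    ∑ a, ∑ b, ∑ c, f a b c = ∑ c, ∑ b, ∑ a, f a b c :=
  calc ∑ a, ∑ b, ∑ c, f a b c = ∑ a, ∑ c, ∑ b, f a b c :=
        Finset.sum_congr rfl fun _ _ => Finset.sum_comm
    _ = ∑ c, ∑ a, ∑ b, f a b c := Finset.sum_comm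
    _ = ∑ c, ∑ b, ∑ a, f a b c := Finset.sum_congr rfl fun _ _ => Finset.sum_comm

private lemma kron_mulVec {n : ℕ} {S : Type*} [Fintype S] (A : S → Matrix (Fin n) (Fin n) ℝ)
    (X : Matrix (Fin n) (Fin n) ℝ) (a b : Fin n) :
    ((∑ σ : S, Matrix.kroneckerMap (· * ·) (A σ)ᵀ (A σ)ᵀ) *ᵥ fun cd => X cd.1 cd.2) (a, b)
      = (∑ σ : S, (A σ)ᵀ * X * A σ) a b := by
  simp only [Matrix.mulVec, dotProduct, Matrix.sum_apply, Matrix.mul_apply,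
    Matrix.kroneckerMap_apply, Matrix.transpose_apply, Fintype.sum_prod_type,
    Finset.sum_mul, Finset.mul_sum]
  rw [sum_reverse]
  refine Finset.sum_congr rfl fun σ _ => Finset.sum_congr rfl fun d _ =>
    Finset.sum_congr rfl fun c _ => by ring

private lemma sum_sq_mulVec {n : ℕ} (M : Matrix (Fin n) (Fin n) ℝ) (x : Fin n → ℝ) :
    ∑ l, ((M *ᵥ x) l) ^ 2 = ∑ a, ∑ b, x a * x b * (Mᵀ * M) a b := by
  simp only [Matrix.mulVec, dotProduct, pow_two, Finset.sum_mul_sum,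
    Matrix.mul_apply, Matrix.transpose_apply, Finset.mul_sum, Finset.sum_mul]
  rw [sum_reverse]
  refine Finset.sum_congr rfl fun a _ => Finset.sum_congr rfl fun b _ =>
    Finset.sum_congr rfl fun l _ => by ring

theorem squareSummable_of_stable_representation
    {n p : ℕ} {S : Type*} [Fintype S] {J : Type*} [Fintype J]
    (A : S → Matrix (Fin n) (Fin n) ℝ) (B : J → (Fin n → ℝ))
    (C : Matrix (Fin p) (Fin n) ℝ)
    (Ser : J → List S → (Fin p → ℝ))
    (hrep : ∀ j w, Ser j w = C *ᵥ ((wordProd A w) *ᵥ B j))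
    (hstab : ∀ μ : ℂ,
      μ ∈ spectrum ℂ
        ((∑ σ : S, Matrix.kroneckerMap (· * ·) (A σ)ᵀ (A σ)ᵀ).map
          (algebraMap ℝ ℂ)) →
      ‖μ‖ < 1)
    (j : J) :
    Summable (fun w : List S => ∑ i : Fin p, (Ser j w i) ^ 2) := by
  rcases Nat.eq_zero_or_pos n with hn | hn
  · subst hn
    have h0 : ∀ w : List S, ∑ i : Fin p, (Ser j w i) ^ 2 = 0 := by
      intro w
      refine Finset.sum_eq_zero fun i _ => ?_
      rw [hrep]
      simp [Matrix.mulVec, dotProduct]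
    exact summable_zero.congr fun w => (h0 w).symm
  haveI : NeZero n := ⟨hn.ne'⟩
  set Atil : Matrix (Fin n × Fin n) (Fin n × Fin n) ℝ :=
    ∑ σ : S, Matrix.kroneckerMap (· * ·) (A σ)ᵀ (A σ)ᵀ with hAtil
  set Mc : Matrix (Fin n × Fin n) (Fin n × Fin n) ℂ := Atil.map (algebraMap ℝ ℂ) with hMcdef
  -- geometric decay of powers of Mc
  obtain ⟨ρ, N, hρ1, hgeo⟩ : ∃ (ρ : NNReal) (N : ℕ), (ρ : ℝ) < 1 ∧
      ∀ m ≥ N, ‖Mc ^ m‖ ≤ (ρ : ℝ) ^ m := by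
    have hsr : spectralRadius ℂ Mc < 1 := by
      refine spectrum.spectralRadius_lt_of_forall_lt Mc fun z hz => ?_
      have h := hstab z hz
      exact_mod_cast h
    obtain ⟨ρ, hρ1, hρ2⟩ := ENNReal.lt_iff_exists_nnreal_btwn.mp hsr
    have htend := spectrum.pow_nnnorm_pow_one_div_tendsto_nhds_spectralRadius Mc
    have hev : ∀ᶠ m : ℕ in Filter.atTop, (‖Mc ^ m‖₊ : ENNReal) ^ (1 / m : ℝ) < ρ :=
      htend.eventually_lt_const hρ1
    obtain ⟨N, hN⟩ := Filter.eventually_atTop.mp hev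
    refine ⟨ρ, N + 1, by exact_mod_cast hρ2, fun m hm => ?_⟩
    have hm0 : (m : ℝ) ≠ 0 := by
      have : 0 < m := by omega
      positivity
    have h2 : (((‖Mc ^ m‖₊ : ENNReal)) ^ (1 / m : ℝ)) ^ (m : ℝ) ≤ (ρ : ENNReal) ^ (m : ℝ) :=
      ENNReal.rpow_le_rpow (hN m (by omega)).le (Nat.cast_nonneg m)
    rw [← ENNReal.rpow_mul, one_div, inv_mul_cancel₀ hm0, ENNReal.rpow_one,
      ENNReal.rpow_natCast] at h2
    have h3 : ‖Mc ^ m‖₊ ≤ ρ ^ m := by exact_mod_cast h2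
    exact_mod_cast h3
  have hsumnorm : Summable (fun m : ℕ => ‖Mc ^ m‖) := by
    rw [← summable_nat_add_iff N]
    refine Summable.of_nonneg_of_le (fun m => norm_nonneg _) (fun m => ?_)
      (summable_geometric_of_lt_one ρ.coe_nonneg hρ1)
    calc ‖Mc ^ (m + N)‖ ≤ (ρ : ℝ) ^ (m + N) := hgeo _ (by omega)
      _ ≤ (ρ : ℝ) ^ m := pow_le_pow_of_le_one ρ.coe_nonneg hρ1.le (by omega)
  -- entrywise bound on powers of Atil
  have hentry : ∀ (k : ℕ) (x y : Fin n × Fin n), |(Atil ^ k) x y| ≤ ‖Mc ^ k‖ := by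
    intro k x y
    have h1 : Mc ^ k = (Atil ^ k).map (algebraMap ℝ ℂ) := by
      rw [hMcdef, ← RingHom.mapMatrix_apply, ← RingHom.mapMatrix_apply, map_pow]
    have h2 : ‖(Mc ^ k) x y‖ ≤ ‖Mc ^ k‖ := by
      have := entry_nnnorm_le (Mc ^ k) x y
      exact_mod_cast this
    rwa [h1, Matrix.map_apply,
      show (algebraMap ℝ ℂ) ((Atil ^ k) x y) = ((Atil ^ k) x y : ℂ) from rfl,
      Complex.norm_real, Real.norm_eq_abs, ← h1] at h2
  -- the word-sum matrices
  set Q : ℕ → Matrix (Fin n) (Fin n) ℝ :=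
    fun k => ∑ v : Fin k → S, (wordProd A (List.ofFn v))ᵀ * wordProd A (List.ofFn v) with hQ
  have hQrec : ∀ k, Q (k + 1) = ∑ σ : S, (A σ)ᵀ * Q k * A σ := by
    intro k
    simp only [hQ]
    rw [← Equiv.sum_comp (Fin.consEquiv (fun _ : Fin (k + 1) => S))
      (fun v => (wordProd A (List.ofFn v))ᵀ * wordProd A (List.ofFn v)),
      Fintype.sum_prod_type]
    refine Finset.sum_congr rfl fun σ _ => ?_
    rw [Finset.mul_sum, Finset.sum_mul]
    refine Finset.sum_congr rfl fun v _ => ?_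
    have h3 : List.ofFn ((Fin.consEquiv (fun _ : Fin (k + 1) => S)) (σ, v))
        = σ :: List.ofFn v := by
      simp [Fin.consEquiv, List.ofFn_succ]
    rw [h3, wordProd_cons, transpose_mul]
    simp [mul_assoc]
  have hQentry : ∀ k a b, Q k a b
      = ((Atil ^ k) *ᵥ fun cd => (1 : Matrix (Fin n) (Fin n) ℝ) cd.1 cd.2) (a, b) := by
    intro k
    induction k with
    | zero =>
      intro a b
      have hQ0 : Q 0 = 1 := by
        simp only [hQ]
        simp [wordProd]
      rw [hQ0, pow_zero, Matrix.one_mulVec]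
    | succ k ih =>
      intro a b
      have hvec : (fun cd : Fin n × Fin n => Q k cd.1 cd.2)
          = (Atil ^ k) *ᵥ fun cd => (1 : Matrix (Fin n) (Fin n) ℝ) cd.1 cd.2 :=
        funext fun cd => ih cd.1 cd.2
      rw [hQrec k, pow_succ', ← Matrix.mulVec_mulVec, ← hvec, hAtil]
      exact (kron_mulVec A (Q k) a b).symm
  have hQbound : ∀ k a b, |Q k a b| ≤ (n : ℝ) * ‖Mc ^ k‖ := by
    intro k a b
    rw [hQentry k a b]
    have hdiag : ((Atil ^ k) *ᵥ fun cd => (1 : Matrix (Fin n) (Fin n) ℝ) cd.1 cd.2) (a, b)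
        = ∑ c : Fin n, (Atil ^ k) (a, b) (c, c) := by
      simp [Matrix.mulVec, dotProduct, Fintype.sum_prod_type, Matrix.one_apply,
        mul_ite, mul_one, mul_zero]
    rw [hdiag]
    calc |∑ c : Fin n, (Atil ^ k) (a, b) (c, c)|
        ≤ ∑ c : Fin n, |(Atil ^ k) (a, b) (c, c)| := Finset.abs_sum_le_sum_abs _ _
      _ ≤ ∑ _c : Fin n, ‖Mc ^ k‖ := Finset.sum_le_sum fun c _ => hentry k _ _
      _ = (n : ℝ) * ‖Mc ^ k‖ := by
          simp [Finset.sum_const, nsmul_eq_mul]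
  -- Cauchy-Schwarz step
  set cC : ℝ := ∑ i : Fin p, ∑ l : Fin n, (C i l) ^ 2 with hcC
  have hcC0 : 0 ≤ cC := by positivity
  have hCS : ∀ w : List S, ∑ i : Fin p, (Ser j w i) ^ 2
      ≤ cC * ∑ l, ((wordProd A w *ᵥ B j) l) ^ 2 := by
    intro w
    rw [hcC, Finset.sum_mul]
    refine Finset.sum_le_sum fun i _ => ?_
    rw [hrep]
    have := Finset.sum_mul_sq_le_sq_mul_sq Finset.univ (fun l => C i l)
      (fun l => (wordProd A w *ᵥ B j) l)
    simpa [Matrix.mulVec, dotProduct] using this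
  have hlen : ∀ k : ℕ, ∑ v : Fin k → S, ∑ l, ((wordProd A (List.ofFn v) *ᵥ B j) l) ^ 2
      = ∑ a, ∑ b, B j a * B j b * Q k a b := by
    intro k
    rw [Finset.sum_congr rfl fun v (_ : v ∈ Finset.univ) =>
      sum_sq_mulVec (wordProd A (List.ofFn v)) (B j)]
    rw [Finset.sum_comm]
    refine Finset.sum_congr rfl fun a _ => ?_
    rw [Finset.sum_comm]
    refine Finset.sum_congr rfl fun b _ => ?_
    simp only [hQ, Matrix.sum_apply, Finset.mul_sum]
  set cB : ℝ := ∑ a, ∑ b, |B j a| * |B j b| with hcB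
  have hG : ∀ k : ℕ, ∑ v : Fin k → S, ∑ i : Fin p, (Ser j (List.ofFn v) i) ^ 2
      ≤ (cC * cB * n) * ‖Mc ^ k‖ := by
    intro k
    calc ∑ v : Fin k → S, ∑ i : Fin p, (Ser j (List.ofFn v) i) ^ 2
        ≤ ∑ v : Fin k → S, cC * ∑ l, ((wordProd A (List.ofFn v) *ᵥ B j) l) ^ 2 :=
          Finset.sum_le_sum fun v _ => hCS _
      _ = cC * ∑ v : Fin k → S, ∑ l, ((wordProd A (List.ofFn v) *ᵥ B j) l) ^ 2 :=
          (Finset.mul_sum _ _ _).symm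
      _ = cC * ∑ a, ∑ b, B j a * B j b * Q k a b := by rw [hlen k]
      _ ≤ cC * (cB * ((n : ℝ) * ‖Mc ^ k‖)) := by
          refine mul_le_mul_of_nonneg_left ?_ hcC0
          calc ∑ a, ∑ b, B j a * B j b * Q k a b
              ≤ ∑ a, ∑ b, |B j a| * |B j b| * ((n : ℝ) * ‖Mc ^ k‖) := by
                refine Finset.sum_le_sum fun a _ => Finset.sum_le_sum fun b _ => ?_
                calc B j a * B j b * Q k a b ≤ |B j a * B j b * Q k a b| := le_abs_self _
                  _ = |B j a| * |B j b| * |Q k a b| := by rw [abs_mul, abs_mul]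
                  _ ≤ |B j a| * |B j b| * ((n : ℝ) * ‖Mc ^ k‖) := by
                      refine mul_le_mul_of_nonneg_left (hQbound k a b) ?_
                      positivity
            _ = cB * ((n : ℝ) * ‖Mc ^ k‖) := by
                rw [hcB, Finset.sum_mul]
                exact Finset.sum_congr rfl fun a _ => (Finset.sum_mul _ _ _).symm
      _ = (cC * cB * n) * ‖Mc ^ k‖ := by ring
  have hGsum : Summable (fun k : ℕ => ∑ v : Fin k → S, ∑ i : Fin p,
      (Ser j (List.ofFn v) i) ^ 2) :=
    Summable.of_nonneg_of_le
      (fun k => Finset.sum_nonneg fun v _ => Finset.sum_nonneg fun i _ => sq_nonneg _)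
      hG (hsumnorm.mul_left _)
  refine (Equiv.summable_iff (List.equivSigmaTuple (α := S)).symm
    (f := fun w : List S => ∑ i : Fin p, (Ser j w i) ^ 2)).mp ?_
  have : Summable (fun x : Σ k : ℕ, Fin k → S => ∑ i : Fin p, (Ser j (List.ofFn x.2) i) ^ 2) := by
    refine (summable_sigma_of_nonneg ?_).mpr ⟨fun k => Summable.of_finite, ?_⟩
    · exact fun x => Finset.sum_nonneg fun i _ => sq_nonneg _
    · exact hGsum.congr fun k => (tsum_fintype _).symm
  exact this

end AuxSquareSummable
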